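/- For all x, y ∈ ℚ_p the following three identities hold: (i) Σ_{a ∈ ℤ_p/pℤ_p} σ(x+p^{−1}a)·σ(y+p^{−1}a) = σ(px)·σ(py)·σ(x−y); (ii) Σ_{a ∈ ℤ_p/p²ℤ_p} σ(x+p^{−2}a)·σ(y+p^{−2}a) = σ(p²x)·σ(p²y)·σ(x−y); (iii) Σ_{a ∈ ℤ_p/p²ℤ_p} σ(p^{−1}(x+a))·σ(p^{−1}(y+p^{−1}a)) = σ(x)·σ(py)·σ(p^{−1}x − y). -/

import Mathlib

noncomputable section
open scoped Classical

/-- The characteristic function σ of ℤ_p inside ℚ_p: `σ(x) = 1` if `x ∈ ℤ_p`, else 0. -/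
def pind {p : ℕ} [Fact p.Prime] (x : ℚ_[p]) : ℝ := if ‖x‖ ≤ 1 then 1 else 0

section Aux

variable {p : ℕ} [hp : Fact p.Prime]

/-- Ultrametric: if `‖u‖ ≤ c` then `‖u + v‖ ≤ c ↔ ‖v‖ ≤ c`. -/
lemma ultra {c : ℝ} {u v : ℚ_[p]} (hu : ‖u‖ ≤ c) : ‖u + v‖ ≤ c ↔ ‖v‖ ≤ c := by
  constructor
  · intro h
    have h2 : ‖v‖ ≤ max ‖u + v‖ ‖u‖ := by
      have := Padic.nonarchimedean (u + v) (-u)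
      simpa using this
    exact h2.trans (max_le h hu)
  · intro h
    exact (Padic.nonarchimedean u v).trans (max_le hu h)

lemma pcast_ne_zero : ((p : ℚ_[p]) : ℚ_[p]) ≠ 0 :=
  Nat.cast_ne_zero.mpr hp.out.ne_zero

/-- Reduction of the norm condition. -/
lemma hred (n : ℕ) (w : ℚ_[p]) (t : ℚ_[p]) :
    ‖w + ((p : ℚ_[p]) ^ n)⁻¹ * t‖ ≤ 1 ↔
      ‖(p : ℚ_[p]) ^ n * w + t‖ ≤ (p : ℝ) ^ (-(n : ℤ)) := by
  have hq : ((p : ℚ_[p]) ^ n) ≠ 0 := pow_ne_zero _ pcast_ne_zero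
  have hrw : w + ((p : ℚ_[p]) ^ n)⁻¹ * t
      = ((p : ℚ_[p]) ^ n)⁻¹ * ((p : ℚ_[p]) ^ n * w + t) := by
    field_simp
  rw [hrw, norm_mul, norm_inv, Padic.norm_p_pow]
  have hpos : (0 : ℝ) < (p : ℝ) ^ (-(n : ℤ)) := by
    apply zpow_pos
    exact_mod_cast hp.out.pos
  rw [inv_mul_le_iff₀ hpos, mul_one]

/-- Unique residue: if `‖z‖ ≤ 1`, there is a unique `s < p^n` with
`‖z + s‖ ≤ p^(-n)`. -/
lemma keyU (n : ℕ) (z : ℚ_[p]) (hz : ‖z‖ ≤ 1) :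
    ∃ s : ℕ, s < p ^ n ∧ ∀ a : ℕ, a < p ^ n →
      (‖z + (a : ℚ_[p])‖ ≤ (p : ℝ) ^ (-(n : ℤ)) ↔ a = s) := by
  set Z : ℤ_[p] := ⟨z, hz⟩ with hZ
  refine ⟨(-Z).appr n, PadicInt.appr_lt _ _, fun a ha => ?_⟩
  have hspec : ‖(-Z) - ((-Z).appr n : ℤ_[p])‖ ≤ (p : ℝ) ^ (-(n : ℤ)) :=
    (PadicInt.norm_le_pow_iff_mem_span_pow _ n).mpr (PadicInt.appr_spec n (-Z))
  have hs : ‖z + ((-Z).appr n : ℚ_[p])‖ ≤ (p : ℝ) ^ (-(n : ℤ)) := by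
    have : ‖-((-Z) - ((-Z).appr n : ℤ_[p]))‖ ≤ (p : ℝ) ^ (-(n : ℤ)) := by
      rwa [norm_neg]
    have heq : ((-((-Z) - ((-Z).appr n : ℤ_[p])) : ℤ_[p]) : ℚ_[p])
        = z + ((-Z).appr n : ℚ_[p]) := by
      push_cast [hZ]
      change -((-z) - ((-Z).appr n : ℚ_[p])) = z + ((-Z).appr n : ℚ_[p])
      ring
    rwa [PadicInt.norm_def, heq] at this
  constructor
  · intro h
    have hdiff : ‖((a : ℚ_[p]) - ((-Z).appr n : ℚ_[p]))‖ ≤ (p : ℝ) ^ (-(n : ℤ)) := by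
      have heq : (a : ℚ_[p]) - ((-Z).appr n : ℚ_[p])
          = (z + (a : ℚ_[p])) - (z + ((-Z).appr n : ℚ_[p])) := by ring
      rw [heq, sub_eq_add_neg]
      refine (Padic.nonarchimedean _ _).trans (max_le h ?_)
      rw [norm_neg]
      exact hs
    have hint : ‖(((a : ℤ) - ((-Z).appr n : ℤ) : ℤ) : ℚ_[p])‖ ≤ (p : ℝ) ^ (-(n : ℤ)) := by
      push_cast
      exact hdiff
    have hdvd : ((p : ℤ) ^ n) ∣ ((a : ℤ) - ((-Z).appr n : ℤ)) :=
      (Padic.norm_int_le_pow_iff_dvd _ _).mp hint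
    have habs : |(a : ℤ) - ((-Z).appr n : ℤ)| < (p : ℤ) ^ n := by
      have h1 : (a : ℤ) < (p : ℤ) ^ n := by exact_mod_cast ha
      have h2 : (((-Z).appr n : ℤ)) < (p : ℤ) ^ n := by
        exact_mod_cast PadicInt.appr_lt (-Z) n
      have h3 : (0 : ℤ) ≤ (a : ℤ) := Int.ofNat_nonneg a
      have h4 : (0 : ℤ) ≤ (((-Z).appr n : ℤ)) := Int.ofNat_nonneg _
      rw [abs_lt]
      omega
    have := Int.eq_zero_of_abs_lt_dvd hdvd habs
    omega
  · rintro rfl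
    exact hs

lemma pind_eq_one {x : ℚ_[p]} (h : ‖x‖ ≤ 1) : pind x = 1 := if_pos h

lemma pind_eq_zero {x : ℚ_[p]} (h : ¬ ‖x‖ ≤ 1) : pind x = 0 := if_neg h

lemma ppow_neg_le_one (n : ℕ) : (p : ℝ) ^ (-(n : ℤ)) ≤ 1 := by
  apply zpow_le_one_of_nonpos₀
  · exact_mod_cast hp.out.one_le
  · omega

lemma nat_norm_le_one (a : ℕ) : ‖(a : ℚ_[p])‖ ≤ 1 := by
  have := Padic.norm_int_le_one (p := p) (a : ℤ)
  simpa using this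

/-- Generic version of parts (i) and (ii). -/
lemma part_gen (n : ℕ) (x y : ℚ_[p]) :
    (∑ a ∈ Finset.range (p ^ n),
        pind (x + ((p : ℚ_[p]) ^ n)⁻¹ * (a : ℚ_[p]))
          * pind (y + ((p : ℚ_[p]) ^ n)⁻¹ * (a : ℚ_[p])))
      = pind ((p : ℚ_[p]) ^ n * x) * pind ((p : ℚ_[p]) ^ n * y) * pind (x - y) := by
  set q : ℚ_[p] := (p : ℚ_[p]) ^ n with hqdef
  by_cases hy : ‖q * y‖ ≤ 1
  · obtain ⟨s, hslt, hiff⟩ := keyU n (q * y) hy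
    have hys : ‖y + q⁻¹ * (s : ℚ_[p])‖ ≤ 1 :=
      (hred n y _).mpr ((hiff s hslt).mpr rfl)
    have hsum : (∑ a ∈ Finset.range (p ^ n),
        pind (x + q⁻¹ * (a : ℚ_[p])) * pind (y + q⁻¹ * (a : ℚ_[p])))
        = pind (x + q⁻¹ * (s : ℚ_[p])) := by
      rw [Finset.sum_eq_single s]
      · rw [pind_eq_one hys, mul_one]
      · intro a ha hne
        have halt : a < p ^ n := Finset.mem_range.mp ha
        have : ¬ ‖y + q⁻¹ * (a : ℚ_[p])‖ ≤ 1 := by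
          rw [hred n y _]
          intro hc
          exact hne ((hiff a halt).mp hc)
        rw [pind_eq_zero this, mul_zero]
      · intro hs
        exact absurd (Finset.mem_range.mpr hslt) hs
    rw [hsum, pind_eq_one hy]
    have hultra : ‖x + q⁻¹ * (s : ℚ_[p])‖ ≤ 1 ↔ ‖x - y‖ ≤ 1 := by
      have heq : x + q⁻¹ * (s : ℚ_[p]) = (y + q⁻¹ * (s : ℚ_[p])) + (x - y) := by ring
      rw [heq]
      exact ultra hys
    by_cases hxy : ‖x - y‖ ≤ 1
    · have hx : ‖q * x‖ ≤ 1 := by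
        have heq : q * x = q * (x - y) + q * y := by ring
        rw [heq]
        apply (ultra ?_).mpr hy
        rw [norm_mul]
        calc ‖q‖ * ‖x - y‖ ≤ 1 * 1 := by
              apply mul_le_mul _ hxy (norm_nonneg _) zero_le_one
              rw [hqdef, Padic.norm_p_pow]
              exact ppow_neg_le_one n
          _ = 1 := by ring
      rw [pind_eq_one hx, pind_eq_one hxy, pind_eq_one (hultra.mpr hxy)]
      ring
    · rw [pind_eq_zero hxy, pind_eq_zero (fun h => hxy (hultra.mp h))]
      ring
  · have hzero : ∀ a ∈ Finset.range (p ^ n),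
        pind (x + q⁻¹ * (a : ℚ_[p])) * pind (y + q⁻¹ * (a : ℚ_[p])) = 0 := by
      intro a _
      have : ¬ ‖y + q⁻¹ * (a : ℚ_[p])‖ ≤ 1 := by
        rw [hred n y _]
        intro hc
        apply hy
        have h1 : ‖q * y + (a : ℚ_[p])‖ ≤ 1 := hc.trans (ppow_neg_le_one n)
        have heq : q * y = (q * y + (a : ℚ_[p])) + (-(a : ℚ_[p])) := by ring
        rw [heq]
        apply (Padic.nonarchimedean _ _).trans
        apply max_le h1
        rw [norm_neg]
        exact nat_norm_le_one a
      rw [pind_eq_zero this, mul_zero]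
    rw [Finset.sum_eq_zero hzero, pind_eq_zero hy]
    ring

end Aux

/-- for all x, y ∈ ℚ_p,
(i) `Σ_{a ∈ ℤ_p/pℤ_p} σ(x+p⁻¹a)·σ(y+p⁻¹a) = σ(px)·σ(py)·σ(x−y)`;
(ii) `Σ_{a ∈ ℤ_p/p²ℤ_p} σ(x+p⁻²a)·σ(y+p⁻²a) = σ(p²x)·σ(p²y)·σ(x−y)`;
(iii) `Σ_{a ∈ ℤ_p/p²ℤ_p} σ(p⁻¹(x+a))·σ(p⁻¹(y+p⁻¹a)) = σ(x)·σ(py)·σ(p⁻¹x − y)`. -/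
theorem stmt9 (p : ℕ) [Fact p.Prime] (x y : ℚ_[p]) :
    (∑ a ∈ Finset.range p,
        pind (x + (p : ℚ_[p])⁻¹ * (a : ℚ_[p])) * pind (y + (p : ℚ_[p])⁻¹ * (a : ℚ_[p])))
        = pind ((p : ℚ_[p]) * x) * pind ((p : ℚ_[p]) * y) * pind (x - y) ∧
    (∑ a ∈ Finset.range (p ^ 2),
        pind (x + ((p : ℚ_[p]) ^ 2)⁻¹ * (a : ℚ_[p]))
          * pind (y + ((p : ℚ_[p]) ^ 2)⁻¹ * (a : ℚ_[p])))
        = pind ((p : ℚ_[p]) ^ 2 * x) * pind ((p : ℚ_[p]) ^ 2 * y) * pind (x - y) ∧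
    (∑ a ∈ Finset.range (p ^ 2),
        pind ((p : ℚ_[p])⁻¹ * (x + (a : ℚ_[p])))
          * pind ((p : ℚ_[p])⁻¹ * (y + (p : ℚ_[p])⁻¹ * (a : ℚ_[p]))))
        = pind x * pind ((p : ℚ_[p]) * y) * pind ((p : ℚ_[p])⁻¹ * x - y) := by
  have hp : Fact p.Prime := inferInstance
  refine ⟨?_, ?_, ?_⟩
  · have := part_gen (p := p) 1 x y
    simpa [pow_one] using this
  · exact part_gen (p := p) 2 x y
  · -- part (iii)
    -- second factor: p⁻¹ * (y + p⁻¹ a) = (p²)⁻¹ * (p y + a)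
    have hsecond : ∀ a : ℕ, (p : ℚ_[p])⁻¹ * (y + (p : ℚ_[p])⁻¹ * (a : ℚ_[p]))
        = (p : ℚ_[p])⁻¹ * y + ((p : ℚ_[p]) ^ 2)⁻¹ * (a : ℚ_[p]) := by
      intro a
      have hpne : (p : ℚ_[p]) ≠ 0 := pcast_ne_zero
      field_simp
    have hsecond' : ∀ a : ℕ,
        (‖(p : ℚ_[p])⁻¹ * (y + (p : ℚ_[p])⁻¹ * (a : ℚ_[p]))‖ ≤ 1 ↔
          ‖(p : ℚ_[p]) * y + (a : ℚ_[p])‖ ≤ (p : ℝ) ^ (-(2 : ℕ) : ℤ)) := by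
      intro a
      rw [hsecond a]
      have := hred (p := p) 2 ((p : ℚ_[p])⁻¹ * y) (a : ℚ_[p])
      have heq2 : (p : ℚ_[p]) ^ 2 * ((p : ℚ_[p])⁻¹ * y) = (p : ℚ_[p]) * y := by
        have hpne : (p : ℚ_[p]) ≠ 0 := pcast_ne_zero
        field_simp
      rw [heq2] at this
      exact this
    -- first factor: ‖p⁻¹ (x + a)‖ ≤ 1 ↔ ‖x + a‖ ≤ p⁻¹
    have hfirst : ∀ t : ℚ_[p], (‖(p : ℚ_[p])⁻¹ * (x + t)‖ ≤ 1 ↔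
        ‖x + t‖ ≤ (p : ℝ) ^ (-(1 : ℕ) : ℤ)) := by
      intro t
      have := hred (p := p) 1 ((p : ℚ_[p])⁻¹ * x) t
      have hpne : (p : ℚ_[p]) ≠ 0 := pcast_ne_zero
      have heq1 : (p : ℚ_[p])⁻¹ * x + ((p : ℚ_[p]) ^ 1)⁻¹ * t
          = (p : ℚ_[p])⁻¹ * (x + t) := by
        rw [pow_one]; ring
      have heq2 : (p : ℚ_[p]) ^ 1 * ((p : ℚ_[p])⁻¹ * x) + t = x + t := by
        rw [pow_one]
        field_simp
      rw [heq1, heq2] at this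
      exact this
    by_cases hy : ‖(p : ℚ_[p]) * y‖ ≤ 1
    · obtain ⟨s, hslt, hiff⟩ := keyU (p := p) 2 ((p : ℚ_[p]) * y) hy
      have hsnorm : ‖(p : ℚ_[p]) * y + (s : ℚ_[p])‖ ≤ (p : ℝ) ^ (-(2 : ℕ) : ℤ) :=
        (hiff s hslt).mpr rfl
      have hsum : (∑ a ∈ Finset.range (p ^ 2),
          pind ((p : ℚ_[p])⁻¹ * (x + (a : ℚ_[p])))
            * pind ((p : ℚ_[p])⁻¹ * (y + (p : ℚ_[p])⁻¹ * (a : ℚ_[p]))))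
          = pind ((p : ℚ_[p])⁻¹ * (x + (s : ℚ_[p]))) := by
        rw [Finset.sum_eq_single s]
        · rw [pind_eq_one ((hsecond' s).mpr hsnorm), mul_one]
        · intro a ha hne
          have halt : a < p ^ 2 := Finset.mem_range.mp ha
          have : ¬ ‖(p : ℚ_[p])⁻¹ * (y + (p : ℚ_[p])⁻¹ * (a : ℚ_[p]))‖ ≤ 1 := by
            rw [hsecond' a]
            intro hc
            exact hne ((hiff a halt).mp hc)
          rw [pind_eq_zero this, mul_zero]
        · intro hs
          exact absurd (Finset.mem_range.mpr hslt) hs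
      rw [hsum, pind_eq_one hy]
      -- now: pind (p⁻¹(x+s)) = pind x * 1 * pind (p⁻¹ x - y)
      have hp1 : ((p : ℝ) ^ (-(2 : ℕ) : ℤ)) ≤ (p : ℝ) ^ (-(1 : ℕ) : ℤ) := by
        apply zpow_le_zpow_right₀
        · exact_mod_cast hp.out.one_le
        · omega
      have hsnorm1 : ‖(p : ℚ_[p]) * y + (s : ℚ_[p])‖ ≤ (p : ℝ) ^ (-(1 : ℕ) : ℤ) :=
        hsnorm.trans hp1
      have hultra : ‖x + (s : ℚ_[p])‖ ≤ (p : ℝ) ^ (-(1 : ℕ) : ℤ) ↔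
          ‖x - (p : ℚ_[p]) * y‖ ≤ (p : ℝ) ^ (-(1 : ℕ) : ℤ) := by
        have heq : x + (s : ℚ_[p]) = ((p : ℚ_[p]) * y + (s : ℚ_[p])) + (x - (p : ℚ_[p]) * y) := by
          ring
        rw [heq]
        exact ultra hsnorm1
      have hthird : ‖(p : ℚ_[p])⁻¹ * x - y‖ ≤ 1 ↔
          ‖x - (p : ℚ_[p]) * y‖ ≤ (p : ℝ) ^ (-(1 : ℕ) : ℤ) := by
        have := hfirst (-((p : ℚ_[p]) * y))
        have heq1 : (p : ℚ_[p])⁻¹ * (x + -((p : ℚ_[p]) * y)) = (p : ℚ_[p])⁻¹ * x - y := by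
          have hpne : (p : ℚ_[p]) ≠ 0 := pcast_ne_zero
          field_simp
          ring
        have heq2 : x + -((p : ℚ_[p]) * y) = x - (p : ℚ_[p]) * y := by ring
        rw [heq1, heq2] at this
        exact this
      by_cases hcond : ‖x - (p : ℚ_[p]) * y‖ ≤ (p : ℝ) ^ (-(1 : ℕ) : ℤ)
      · have hx : ‖x‖ ≤ 1 := by
          have heq : x = (x - (p : ℚ_[p]) * y) + (p : ℚ_[p]) * y := by ring
          rw [heq]
          exact (ultra (hcond.trans (ppow_neg_le_one 1))).mpr hy
        rw [pind_eq_one hx, pind_eq_one (hthird.mpr hcond),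
          pind_eq_one ((hfirst (s : ℚ_[p])).mpr (hultra.mpr hcond))]
        ring
      · rw [pind_eq_zero (fun h => hcond (hthird.mp h)),
          pind_eq_zero (fun h => hcond (hultra.mp ((hfirst (s : ℚ_[p])).mp h)))]
        ring
    · have hzero : ∀ a ∈ Finset.range (p ^ 2),
          pind ((p : ℚ_[p])⁻¹ * (x + (a : ℚ_[p])))
            * pind ((p : ℚ_[p])⁻¹ * (y + (p : ℚ_[p])⁻¹ * (a : ℚ_[p]))) = 0 := by
        intro a _
        have : ¬ ‖(p : ℚ_[p])⁻¹ * (y + (p : ℚ_[p])⁻¹ * (a : ℚ_[p]))‖ ≤ 1 := by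
          rw [hsecond' a]
          intro hc
          apply hy
          have h1 : ‖(p : ℚ_[p]) * y + (a : ℚ_[p])‖ ≤ 1 := hc.trans (ppow_neg_le_one 2)
          have heq : (p : ℚ_[p]) * y = ((p : ℚ_[p]) * y + (a : ℚ_[p])) + (-(a : ℚ_[p])) := by
            ring
          rw [heq]
          apply (Padic.nonarchimedean _ _).trans
          apply max_le h1
          rw [norm_neg]
          exact nat_norm_le_one a
        rw [pind_eq_zero this, mul_zero]
      rw [Finset.sum_eq_zero hzero, pind_eq_zero hy]
      ring
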